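/- Cross-dependent nested families bound: Let N ≥ (u+s-1)(k-1) with u ≥ s+1 ≥ 2, and let F_1 ⊇ F_2 ⊇ ... ⊇ F_s ⊆ C(N, k-1) (families of (k-1)-subsets of [N]) be cross-dependent: for any choice F_i ∈ F_i (i = 1,...,s) some two of the chosen sets intersect. Then |F_1| + ... + |F_{s-1}| + u·|F_s| ≤ (s-1)·C(N, k-1). -/

import Mathlib

open Finset

def frTuples (N k' t : ℕ) (S : Finset (Fin N)) : Finset (Fin t → Finset (Fin N)) :=
  Finset.univ.filter fun b => (∀ j, b j ⊆ S ∧ (b j).card = k') ∧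
    ∀ j j', j ≠ j' → Disjoint (b j) (b j')

lemma frTuples_mem {N k' t : ℕ} {S : Finset (Fin N)} {b : Fin t → Finset (Fin N)} :
    b ∈ frTuples N k' t S ↔ (∀ j, b j ⊆ S ∧ (b j).card = k') ∧
      ∀ j j', j ≠ j' → Disjoint (b j) (b j') := by
  simp [frTuples]

lemma frTuples_cons {N k' t : ℕ} {S B : Finset (Fin N)} {c : Fin t → Finset (Fin N)}
    (hBS : B ⊆ S) (hBc : B.card = k') (hc : c ∈ frTuples N k' t (S \ B)) :
    Fin.cons B c ∈ frTuples N k' (t + 1) S := by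
  rw [frTuples_mem] at hc ⊢
  obtain ⟨h1, h2⟩ := hc
  have hsub : ∀ j, c j ⊆ S \ B := fun j => (h1 j).1
  have hdisjB : ∀ j, Disjoint (c j) B := fun j => (Finset.subset_sdiff.1 (hsub j)).2
  constructor
  · intro j
    refine Fin.cases ?_ ?_ j
    · simpa using ⟨hBS, hBc⟩
    · intro j'
      simp only [Fin.cons_succ]
      exact ⟨(hsub j').trans (Finset.sdiff_subset), (h1 j').2⟩
  · refine Fin.cases ?_ ?_
    · refine Fin.cases ?_ ?_
      · intro h; exact absurd rfl h
      · intro a' _; simp only [Fin.cons_zero, Fin.cons_succ]; exact (hdisjB a').symm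
    · intro a
      refine Fin.cases ?_ ?_
      · intro _; simp only [Fin.cons_zero, Fin.cons_succ]; exact hdisjB a
      · intro a' h; simp only [Fin.cons_succ]
        exact h2 a a' (fun e => h (by rw [e]))

lemma frTuples_nonempty {N k' : ℕ} : ∀ (t : ℕ) (S : Finset (Fin N)),
    t * k' ≤ S.card → (frTuples N k' t S).Nonempty := by
  intro t
  induction t with
  | zero =>
    intro S _
    exact ⟨fun j => j.elim0, by rw [frTuples_mem]; exact ⟨fun j => j.elim0, fun j => j.elim0⟩⟩
  | succ t ih =>
    intro S hS
    have hk' : k' ≤ S.card := le_trans (by nlinarith) hS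
    obtain ⟨B, hBS, hBc⟩ := Finset.exists_subset_card_eq hk'
    have hcard : t * k' ≤ (S \ B).card := by
      rw [Finset.card_sdiff_of_subset hBS, hBc]
      have : (t + 1) * k' = t * k' + k' := by ring
      omega
    obtain ⟨c, hc⟩ := ih (S \ B) hcard
    exact ⟨Fin.cons B c, frTuples_cons hBS hBc hc⟩

lemma frTuples_image_mem {N k' t : ℕ} {S S' : Finset (Fin N)} (π : Fin N ≃ Fin N)
    (hπ : ∀ x ∈ S, π x ∈ S') {b : Fin t → Finset (Fin N)} (hb : b ∈ frTuples N k' t S) :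
    (fun j => (b j).image π) ∈ frTuples N k' t S' := by
  rw [frTuples_mem] at hb ⊢
  obtain ⟨h1, h2⟩ := hb
  refine ⟨fun j => ⟨?_, ?_⟩, fun j j' hne => ?_⟩
  · intro x hx
    obtain ⟨y, hy, rfl⟩ := Finset.mem_image.1 hx
    exact hπ y ((h1 j).1 hy)
  · rw [Finset.card_image_of_injective _ π.injective]; exact (h1 j).2
  · exact (Finset.disjoint_image π.injective).2 (h2 j j' hne)

lemma frTuples_card_congr {N k' t : ℕ} {S S' : Finset (Fin N)} (h : S.card = S'.card) :
    (frTuples N k' t S).card = (frTuples N k' t S').card := by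
  classical
  have hc : (Sᶜ : Finset (Fin N)).card = (S'ᶜ : Finset (Fin N)).card := by
    simp [Finset.card_compl, h]
  let e : {x // x ∈ S} ≃ {x // x ∈ S'} := Finset.equivOfCardEq h
  let e2 : {x // ¬ x ∈ S} ≃ {x // ¬ x ∈ S'} :=
    ((Equiv.subtypeEquivRight (fun x => (Finset.mem_compl (s := S)).symm)).trans
      (Finset.equivOfCardEq hc)).trans (Equiv.subtypeEquivRight fun x => Finset.mem_compl)
  let π : Fin N ≃ Fin N := Equiv.subtypeCongr e e2
  have hπ : ∀ x ∈ S, π x ∈ S' := by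
    intro x hx
    have : π x = (e ⟨x, hx⟩ : Fin N) := by
      simp [π, Equiv.subtypeCongr, hx]
    rw [this]; exact (e ⟨x, hx⟩).2
  have hπc : ∀ x, x ∉ S → π x ∉ S' := by
    intro x hx
    have : π x = (e2 ⟨x, hx⟩ : Fin N) := by
      simp [π, Equiv.subtypeCongr, hx]
    rw [this]
    have := (e2 ⟨x, hx⟩).2
    simpa using this
  have hπ' : ∀ x ∈ S', π.symm x ∈ S := by
    intro x hx
    by_contra hxs
    have := hπc _ hxs
    rw [Equiv.apply_symm_apply] at this
    exact this hx
  refine Finset.card_bij' (fun b _ => fun j => (b j).image π)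
    (fun b _ => fun j => (b j).image π.symm) ?_ ?_ ?_ ?_
  · intro b hb; exact frTuples_image_mem π hπ hb
  · intro b hb; exact frTuples_image_mem π.symm hπ' hb
  · intro b _
    funext j
    simp [Finset.image_image]
  · intro b _
    funext j
    simp [Finset.image_image]

lemma frTuples_fiber {N k' t : ℕ} {S B : Finset (Fin N)} (hBS : B ⊆ S) (hBc : B.card = k') :
    ((frTuples N k' (t + 1) S).filter fun b => b 0 = B).card
      = (frTuples N k' t (S \ B)).card := by
  refine Finset.card_bij' (fun b _ => Fin.tail b) (fun c _ => Fin.cons B c) ?_ ?_ ?_ ?_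
  · intro b hb
    obtain ⟨hb, hb0⟩ := Finset.mem_filter.1 hb
    rw [frTuples_mem] at hb ⊢
    obtain ⟨h1, h2⟩ := hb
    refine ⟨fun j => ⟨?_, (h1 j.succ).2⟩, fun j j' hne => ?_⟩
    · rw [Finset.subset_sdiff]
      refine ⟨(h1 j.succ).1, ?_⟩
      have := h2 j.succ 0 (Fin.succ_ne_zero j)
      rwa [hb0] at this
    · exact h2 j.succ j'.succ (fun e => hne (Fin.succ_injective _ e))
  · intro c hc
    exact Finset.mem_filter.2 ⟨frTuples_cons hBS hBc hc, Fin.cons_zero _ _⟩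
  · intro b hb
    obtain ⟨_, hb0⟩ := Finset.mem_filter.1 hb
    show Fin.cons B (Fin.tail b) = b
    rw [← hb0]
    exact Fin.cons_self_tail b
  · intro c _
    funext j
    simp [Fin.tail, Fin.cons_succ]

lemma frTuples_coord {N k' t : ℕ} {S : Finset (Fin N)} (F : Finset (Finset (Fin N)))
    (j0 : Fin (t + 1)) :
    ((frTuples N k' (t + 1) S).filter fun b => b j0 ∈ F).card
      = ((frTuples N k' (t + 1) S).filter fun b => b 0 ∈ F).card := by
  have hcomp : ∀ (b : Fin (t+1) → Finset (Fin N)), b ∈ frTuples N k' (t+1) S →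
      (b ∘ Equiv.swap 0 j0) ∈ frTuples N k' (t+1) S := by
    intro b hb
    rw [frTuples_mem] at hb ⊢
    exact ⟨fun j => hb.1 _, fun j j' hne => hb.2 _ _
      (fun e => hne ((Equiv.swap 0 j0).injective e))⟩
  refine Finset.card_bij' (fun b _ => b ∘ Equiv.swap 0 j0) (fun b _ => b ∘ Equiv.swap 0 j0)
    ?_ ?_ ?_ ?_
  · intro b hb
    obtain ⟨hb, hbF⟩ := Finset.mem_filter.1 hb
    refine Finset.mem_filter.2 ⟨hcomp b hb, ?_⟩
    simpa [Equiv.swap_apply_left] using hbF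
  · intro b hb
    obtain ⟨hb, hbF⟩ := Finset.mem_filter.1 hb
    refine Finset.mem_filter.2 ⟨hcomp b hb, ?_⟩
    simpa [Equiv.swap_apply_right] using hbF
  · intro b _
    funext j
    simp [Function.comp, Equiv.swap_apply_self]
  · intro b _
    funext j
    simp [Function.comp, Equiv.swap_apply_self]

lemma frPointwise (s u t : ℕ) (hs : 1 ≤ s) (hut : u + s ≤ t + 1) (m : Fin s → ℕ)
    (hmt : ∀ i, m i ≤ t) (hanti : ∀ i j : Fin s, i ≤ j → m j ≤ m i)
    (i0 : Fin s) (h0 : m i0 + i0.val + 1 ≤ s) :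
    ∑ i : Fin s, (if i.val = s - 1 then u else 1) * m i ≤ (s - 1) * t := by
  set c := i0.val with hc
  have hcs : c + 1 ≤ s := i0.isLt
  set r := s - 1 - c with hr
  have hterm : ∀ i : Fin s, (if i.val = s - 1 then u else 1) * m i
      ≤ (if i.val < c then t else if i.val = s - 1 then u * r else r) := by
    intro i
    by_cases h1 : i.val < c
    · have h2 : ¬ i.val = s - 1 := by omega
      simp only [h1, h2, if_true, if_false, one_mul]
      exact hmt i
    · have hle0 : i0 ≤ i := by
        rw [Fin.le_def]; omega
      have hmi : m i ≤ r := le_trans (hanti i0 i hle0) (by omega)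
      by_cases h2 : i.val = s - 1
      · rw [if_pos h2, if_neg h1, if_pos h2]
        exact Nat.mul_le_mul_left u hmi
      · rw [if_neg h2, if_neg h1, if_neg h2, one_mul]
        exact hmi
  calc ∑ i : Fin s, (if i.val = s - 1 then u else 1) * m i
      ≤ ∑ i : Fin s, (if i.val < c then t else if i.val = s - 1 then u * r else r) :=
        Finset.sum_le_sum fun i _ => hterm i
    _ = ∑ i ∈ Finset.range s, (if i < c then t else if i = s - 1 then u * r else r) :=
        Fin.sum_univ_eq_sum_range (fun i => if i < c then t else if i = s - 1 then u * r else r) s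
    _ ≤ (s - 1) * t := by
      obtain ⟨s', rfl⟩ : ∃ s', s = s' + 1 := ⟨s - 1, by omega⟩
      rw [Finset.sum_range_succ]
      have hlast : (if s' < c then t else if s' = s' + 1 - 1 then u * r else r) = u * r := by
        have : ¬ s' < c := by omega
        simp [this]
      rw [hlast]
      have hsplit : ∑ i ∈ Finset.range s', (if i < c then t else if i = s' + 1 - 1 then u * r else r)
          = ∑ i ∈ Finset.range s', (if i < c then t else r) := by
        refine Finset.sum_congr rfl fun i hi => ?_
        have : ¬ i = s' + 1 - 1 := by simp at hi; omega
        simp only [this, if_false]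
      rw [hsplit]
      have hcs' : c ≤ s' := by omega
      have hsum : ∑ i ∈ Finset.range s', (if i < c then t else r) = c * t + (s' - c) * r := by
        rw [Finset.range_eq_Ico, ← Finset.sum_Ico_consecutive _ (Nat.zero_le c) hcs']
        have e1 : ∑ i ∈ Finset.Ico 0 c, (if i < c then t else r) = c * t := by
          rw [Finset.sum_congr rfl (fun i hi => if_pos (Finset.mem_Ico.1 hi).2)]
          simp [mul_comm]
        have e2 : ∑ i ∈ Finset.Ico c s', (if i < c then t else r) = (s' - c) * r := by
          rw [Finset.sum_congr rfl (fun i hi => if_neg (by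
            have := (Finset.mem_Ico.1 hi).1; omega))]
          simp [Nat.card_Ico, mul_comm]
        rw [e1, e2]
      rw [hsum]
      have hrc : r = s' - c := by omega
      have hrt : r + u ≤ t := by omega
      have : (s' - c) * r + u * r = (r + u) * r := by rw [hrc]; ring
      calc c * t + (s' - c) * r + u * r = c * t + (r + u) * r := by omega
        _ ≤ c * t + t * r := by
            have := Nat.mul_le_mul_right r hrt
            omega
        _ = (c + r) * t := by ring
        _ = (s' + 1 - 1) * t := by
            congr 1
            omega

theorem stmt12 (N k u s : ℕ) (hs : 1 ≤ s) (hu : s + 1 ≤ u)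
    (hN : (u + s - 1) * (k - 1) ≤ N)
    (𝒻 : Fin s → Finset (Finset (Fin N)))
    (huniform : ∀ i, 𝒻 i ⊆ Finset.powersetCard (k - 1) Finset.univ)
    (hnested : ∀ i j : Fin s, i ≤ j → 𝒻 j ⊆ 𝒻 i)
    (hcross : ∀ f : Fin s → Finset (Fin N), (∀ i, f i ∈ 𝒻 i) →
      ∃ i j, i ≠ j ∧ ¬ Disjoint (f i) (f j)) :
    ∑ i : Fin s, (if i.val = s - 1 then u else 1) * (𝒻 i).card
      ≤ (s - 1) * N.choose (k - 1) := by
  classical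
  set k' := k - 1 with hk'
  obtain ⟨t', ht'⟩ : ∃ t', u + s - 1 = t' + 1 := ⟨u + s - 2, by omega⟩
  set T := frTuples N k' (t' + 1) (Finset.univ : Finset (Fin N)) with hT
  have htk : (t' + 1) * k' ≤ N := by rw [← ht']; exact hN
  have hk'le : k' ≤ N := le_trans (by nlinarith) htk
  obtain ⟨B₀, -, hB₀c⟩ := Finset.exists_subset_card_eq
    (show k' ≤ (Finset.univ : Finset (Fin N)).card by simpa using hk'le)
  set E := (frTuples N k' t' (Finset.univ \ B₀)).card with hE
  have hcardsd : ∀ B : Finset (Fin N), B.card = k' → (Finset.univ \ B).card = N - k' := by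
    intro B hB
    rw [Finset.card_sdiff_of_subset (Finset.subset_univ B), hB, Finset.card_univ, Fintype.card_fin]
  have hEpos : 0 < E := by
    refine Finset.card_pos.2 (frTuples_nonempty t' _ ?_)
    rw [hcardsd B₀ hB₀c]
    have : (t' + 1) * k' = t' * k' + k' := by ring
    omega
  have hfiber : ∀ B : Finset (Fin N), B.card = k' → (T.filter fun b => b 0 = B).card = E := by
    intro B hB
    rw [hT, frTuples_fiber (Finset.subset_univ B) hB]
    exact frTuples_card_congr (by rw [hcardsd B hB, hcardsd B₀ hB₀c])
  have hTcard : T.card = N.choose k' * E := by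
    rw [Finset.card_eq_sum_card_fiberwise
      (f := fun b => b 0) (t := Finset.powersetCard k' Finset.univ) ?_]
    · rw [Finset.sum_congr rfl (fun B hB => hfiber B (Finset.mem_powersetCard.1 hB).2),
        Finset.sum_const, Finset.card_powersetCard, Finset.card_univ, Fintype.card_fin,
        smul_eq_mul]
    · intro b hb
      rw [hT, Finset.mem_coe, frTuples_mem] at hb
      exact Finset.mem_powersetCard.2 ⟨Finset.subset_univ _, (hb.1 0).2⟩
  have hfamily : ∀ (i : Fin s) (j : Fin (t' + 1)),
      (T.filter fun b => b j ∈ 𝒻 i).card = (𝒻 i).card * E := by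
    intro i j
    rw [hT, frTuples_coord (𝒻 i) j]
    rw [Finset.card_eq_sum_card_fiberwise
      (s := (frTuples N k' (t' + 1) Finset.univ).filter fun b => b 0 ∈ 𝒻 i)
      (t := 𝒻 i) (f := fun b => b 0) (fun b hb => (Finset.mem_filter.1 hb).2)]
    have heq : ∀ B ∈ 𝒻 i,
        (((frTuples N k' (t' + 1) Finset.univ).filter fun b => b 0 ∈ 𝒻 i).filter
          fun b => b 0 = B).card = E := by
      intro B hB
      have hset : ((frTuples N k' (t' + 1) Finset.univ).filter fun b => b 0 ∈ 𝒻 i).filter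
          (fun b => b 0 = B) = (frTuples N k' (t' + 1) Finset.univ).filter fun b => b 0 = B := by
        ext b
        simp only [Finset.mem_filter]
        constructor
        · rintro ⟨⟨h1, _⟩, h3⟩; exact ⟨h1, h3⟩
        · rintro ⟨h1, h3⟩; exact ⟨⟨h1, h3 ▸ hB⟩, h3⟩
      rw [hset, ← hT]
      exact hfiber B (Finset.mem_powersetCard.1 (huniform i hB)).2
    rw [Finset.sum_congr rfl heq, Finset.sum_const, smul_eq_mul]
  have hpoint : ∀ b ∈ T, ∑ i : Fin s, (if i.val = s - 1 then u else 1) *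
      (Finset.univ.filter fun j : Fin (t' + 1) => b j ∈ 𝒻 i).card ≤ (s - 1) * (t' + 1) := by
    intro b hb
    rw [hT, frTuples_mem] at hb
    set m : Fin s → ℕ := fun i => (Finset.univ.filter fun j : Fin (t' + 1) => b j ∈ 𝒻 i).card
      with hm
    have hanti : ∀ i j : Fin s, i ≤ j → m j ≤ m i := by
      intro i j hij
      refine Finset.card_le_card ?_
      intro x hx
      rw [Finset.mem_filter] at hx ⊢
      exact ⟨hx.1, hnested i j hij hx.2⟩
    have hmt : ∀ i, m i ≤ t' + 1 := by
      intro i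
      refine le_trans (Finset.card_filter_le _ _) (by simp)
    have hex : ∃ i0 : Fin s, m i0 + i0.val + 1 ≤ s := by
      by_contra hcon
      push_neg at hcon
      have hall : ∀ Sset : Finset (Fin s), Sset.card ≤ (Sset.biUnion
          (fun i : Fin s => Finset.univ.filter fun j : Fin (t' + 1) => b j ∈ 𝒻 i)).card := by
        intro Sset
        rcases Sset.eq_empty_or_nonempty with h | hSne
        · simp [h]
        · have h1 : Sset.card ≤ s - (Sset.min' hSne).val := by
            have himg : Sset.image Fin.val ⊆ Finset.Ico (Sset.min' hSne).val s := by
              intro x hx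
              obtain ⟨i, hi, rfl⟩ := Finset.mem_image.1 hx
              exact Finset.mem_Ico.2 ⟨Sset.min'_le i hi, i.isLt⟩
            calc Sset.card = (Sset.image Fin.val).card :=
                (Finset.card_image_of_injective _ Fin.val_injective).symm
              _ ≤ (Finset.Ico (Sset.min' hSne).val s).card := Finset.card_le_card himg
              _ = s - (Sset.min' hSne).val := Nat.card_Ico _ _
          have h2 : s - (Sset.min' hSne).val ≤ m (Sset.min' hSne) := by
            have := hcon (Sset.min' hSne)
            omega
          calc Sset.card ≤ m (Sset.min' hSne) := le_trans h1 h2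
            _ ≤ (Sset.biUnion
                  (fun i : Fin s => Finset.univ.filter fun j : Fin (t' + 1) => b j ∈ 𝒻 i)).card :=
                Finset.card_le_card (Finset.subset_biUnion_of_mem
                  (fun i : Fin s => Finset.univ.filter fun j : Fin (t' + 1) => b j ∈ 𝒻 i)
                  (Sset.min'_mem hSne))
      obtain ⟨f', hinj, hf'⟩ := (Finset.all_card_le_biUnion_card_iff_exists_injective
        (fun i : Fin s => Finset.univ.filter fun j : Fin (t' + 1) => b j ∈ 𝒻 i)).1 hall
      obtain ⟨i, j, hij, hndisj⟩ := hcross (fun i => b (f' i))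
        (fun i => (Finset.mem_filter.1 (hf' i)).2)
      exact hndisj (hb.2 (f' i) (f' j) (fun e => hij (hinj e)))
    obtain ⟨i0, hi0⟩ := hex
    exact frPointwise s u (t' + 1) hs (by omega) m hmt hanti i0 hi0
  have hbm : ∀ i : Fin s, (∑ b ∈ T,
      (Finset.univ.filter fun j : Fin (t' + 1) => b j ∈ 𝒻 i).card)
        = (t' + 1) * ((𝒻 i).card * E) := by
    intro i
    calc (∑ b ∈ T, (Finset.univ.filter fun j : Fin (t' + 1) => b j ∈ 𝒻 i).card)
        = ∑ b ∈ T, ∑ j : Fin (t' + 1), (if b j ∈ 𝒻 i then 1 else 0) := by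
          refine Finset.sum_congr rfl fun b _ => ?_
          rw [Finset.card_filter]
      _ = ∑ j : Fin (t' + 1), ∑ b ∈ T, (if b j ∈ 𝒻 i then 1 else 0) := Finset.sum_comm
      _ = ∑ j : Fin (t' + 1), (T.filter fun b => b j ∈ 𝒻 i).card := by
          refine Finset.sum_congr rfl fun j _ => ?_
          rw [Finset.card_filter]
      _ = ∑ _j : Fin (t' + 1), (𝒻 i).card * E :=
          Finset.sum_congr rfl fun j _ => hfamily i j
      _ = (t' + 1) * ((𝒻 i).card * E) := by
          rw [Finset.sum_const, Finset.card_univ, Fintype.card_fin, smul_eq_mul]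
  have hmain : ((t' + 1) * E) * (∑ i : Fin s, (if i.val = s - 1 then u else 1) * (𝒻 i).card)
      ≤ ((t' + 1) * E) * ((s - 1) * N.choose k') := by
    calc ((t' + 1) * E) * (∑ i : Fin s, (if i.val = s - 1 then u else 1) * (𝒻 i).card)
        = ∑ i : Fin s, (if i.val = s - 1 then u else 1) *
            ((t' + 1) * ((𝒻 i).card * E)) := by
          rw [Finset.mul_sum]
          exact Finset.sum_congr rfl fun i _ => by ring
      _ = ∑ i : Fin s, (if i.val = s - 1 then u else 1) * (∑ b ∈ T,
            (Finset.univ.filter fun j : Fin (t' + 1) => b j ∈ 𝒻 i).card) := by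
          exact Finset.sum_congr rfl fun i _ => by rw [hbm i]
      _ = ∑ i : Fin s, ∑ b ∈ T, (if i.val = s - 1 then u else 1) *
            (Finset.univ.filter fun j : Fin (t' + 1) => b j ∈ 𝒻 i).card :=
          Finset.sum_congr rfl fun i _ => Finset.mul_sum _ _ _
      _ = ∑ b ∈ T, ∑ i : Fin s, (if i.val = s - 1 then u else 1) *
            (Finset.univ.filter fun j : Fin (t' + 1) => b j ∈ 𝒻 i).card :=
          Finset.sum_comm
      _ ≤ ∑ _b ∈ T, (s - 1) * (t' + 1) := Finset.sum_le_sum hpoint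
      _ = T.card * ((s - 1) * (t' + 1)) := by rw [Finset.sum_const, smul_eq_mul]
      _ = ((t' + 1) * E) * ((s - 1) * N.choose k') := by rw [hTcard]; ring
  exact Nat.le_of_mul_le_mul_left hmain (by positivity)
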